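/- For every integer r ≥ 2 and every finite tree T with ℓ leaves, the r-colour discrepancy of the family of all subtrees of T is at least ⌈(r-1)ℓ/r⌉; that is, for every colouring f : E(T) → {1,…,r} there exists a subtree S of T and a colour j ∈ {1,…,r} such that r·|{e ∈ E(S) : f(e) = j}| − |E(S)| ≥ ⌈(r-1)ℓ/r⌉. -/

import Mathlib

namespace MDisc

open SimpleGraph Finset



variable {V : Type*} (T : SimpleGraph V)

/-- The graph induced on a finset `A` (as a graph on `V`). -/
def GA (A : Finset V) : SimpleGraph V where
  Adj a b := T.Adj a b ∧ a ∈ A ∧ b ∈ A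
  symm := ⟨fun a b ⟨h, ha, hb⟩ => ⟨h.symm, hb, ha⟩⟩
  loopless := ⟨fun a ⟨h, _, _⟩ => T.loopless.irrefl a h⟩

lemma GA_adj {A : Finset V} {a b : V} :
    (GA T A).Adj a b ↔ T.Adj a b ∧ a ∈ A ∧ b ∈ A := Iff.rfl

lemma GA_le (A : Finset V) : GA T A ≤ T := fun _ _ h => h.1

lemma GA_mono {A B : Finset V} (h : A ⊆ B) : GA T A ≤ GA T B :=
  fun _ _ ⟨ha, h1, h2⟩ => ⟨ha, h h1, h h2⟩

/-- `A` is connected in the induced sense. -/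
def Conn (A : Finset V) : Prop :=
  ∀ ⦃x⦄, x ∈ A → ∀ ⦃y⦄, y ∈ A → (GA T A).Reachable x y

variable [Fintype V] [DecidableEq V] [DecidableRel T.Adj]

open Classical in
/-- Edges of `T` with both endpoints in `A`. -/
noncomputable def edgesIn (A : Finset V) : Finset (Sym2 V) :=
  T.edgeFinset.filter (fun e => ∀ v ∈ e, v ∈ A)

open Classical in
/-- Number of edges within `A` of colour `j`. -/
noncomputable def cnt (r : ℕ) (f : Sym2 V → Fin r) (j : Fin r) (A : Finset V) : ℕ :=
  ((edgesIn T A).filter (fun e => f e = j)).card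

/-- The imbalance of colour `j` within a connected set `A`. -/
noncomputable def imb (r : ℕ) (f : Sym2 V → Fin r) (j : Fin r) (A : Finset V) : ℤ :=
  (r : ℤ) * cnt T r f j A - ((A.card : ℤ) - 1)

/-- Degree within `A`. -/
def degA (A : Finset V) (a : V) : ℕ := (A.filter fun b => T.Adj a b).card

/-- Leaves of `A` other than `ρ`. -/
def Lv (A : Finset V) (ρ : V) : Finset V :=
  A.filter fun a => a ≠ ρ ∧ degA T A a = 1

lemma mem_edgesIn {A : Finset V} {e : Sym2 V} :
    e ∈ edgesIn T A ↔ e ∈ T.edgeSet ∧ ∀ v ∈ e, v ∈ A := by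
  classical
  simp [edgesIn, Finset.mem_filter, mem_edgeFinset]


open SimpleGraph Finset


variable {V : Type*} (T : SimpleGraph V)

lemma conn_singleton (v : V) : Conn T {v} := by
  intro x hx y hy
  simp only [Finset.mem_singleton] at hx hy
  subst hx; subst hy
  exact Reachable.refl _

variable [DecidableEq V]

lemma conn_union {B₁ B₂ : Finset V} {ρ c : V} (h1 : Conn T B₁) (h2 : Conn T B₂)
    (hρ : ρ ∈ B₁) (hc : c ∈ B₂) (hadj : T.Adj ρ c) : Conn T (B₁ ∪ B₂) := by
  have hmono1 : GA T B₁ ≤ GA T (B₁ ∪ B₂) := GA_mono T Finset.subset_union_left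
  have hmono2 : GA T B₂ ≤ GA T (B₁ ∪ B₂) := GA_mono T Finset.subset_union_right
  have hedge : (GA T (B₁ ∪ B₂)).Adj ρ c :=
    ⟨hadj, Finset.mem_union_left _ hρ, Finset.mem_union_right _ hc⟩
  have key : ∀ x ∈ B₁ ∪ B₂, (GA T (B₁ ∪ B₂)).Reachable x ρ := by
    intro x hx
    rcases Finset.mem_union.mp hx with hx1 | hx2
    · exact (h1 hx1 hρ).mono hmono1
    · exact ((h2 hx2 hc).mono hmono2).trans hedge.reachable.symm
  intro x hx y hy
  exact (key x hx).trans (key y hy).symm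

variable [Fintype V] [DecidableRel T.Adj]

lemma mem_of_mem_edgesIn {A : Finset V} {e : Sym2 V} (he : e ∈ edgesIn T A) {v : V}
    (hv : v ∈ e) : v ∈ A := ((mem_edgesIn T).mp he).2 v hv

lemma imb_union {r : ℕ} {f : Sym2 V → Fin r} {A₁ A₂ B₁ B₂ : Finset V}
    (hd : Disjoint A₁ A₂) (hB₁ : B₁ ⊆ A₁) (hB₂ : B₂ ⊆ A₂) {ρ c : V}
    (hρ : ρ ∈ B₁) (hc : c ∈ B₂) (hadj : T.Adj ρ c) (j : Fin r) :
    imb T r f j B₁ + imb T r f j B₂ + ((r : ℤ) * (if f s(ρ, c) = j then 1 else 0) - 1)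
      ≤ imb T r f j (B₁ ∪ B₂) := by
  classical
  have hdB : Disjoint B₁ B₂ := hd.mono hB₁ hB₂
  have hcard : (B₁ ∪ B₂).card = B₁.card + B₂.card := Finset.card_union_of_disjoint hdB
  -- edge sets
  set E1 : Finset (Sym2 V) := (edgesIn T B₁).filter (fun e => f e = j) with hE1
  set E2 : Finset (Sym2 V) := (edgesIn T B₂).filter (fun e => f e = j) with hE2
  set X : Finset (Sym2 V) := if f s(ρ, c) = j then {s(ρ, c)} else ∅ with hX
  have hsub : E1 ∪ E2 ∪ X ⊆ (edgesIn T (B₁ ∪ B₂)).filter (fun e => f e = j) := by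
    intro e he
    simp only [Finset.mem_union] at he
    rcases he with (he | he) | he
    · rw [Finset.mem_filter] at he ⊢
      refine ⟨?_, he.2⟩
      rw [mem_edgesIn] at he ⊢
      exact ⟨he.1.1, fun v hv => Finset.mem_union_left _ (he.1.2 v hv)⟩
    · rw [Finset.mem_filter] at he ⊢
      refine ⟨?_, he.2⟩
      rw [mem_edgesIn] at he ⊢
      exact ⟨he.1.1, fun v hv => Finset.mem_union_right _ (he.1.2 v hv)⟩
    · rw [hX] at he
      by_cases hfj : f s(ρ, c) = j
      · rw [if_pos hfj, Finset.mem_singleton] at he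
        subst he
        rw [Finset.mem_filter, mem_edgesIn]
        refine ⟨⟨hadj, ?_⟩, hfj⟩
        intro v hv
        rcases Sym2.mem_iff.mp hv with rfl | rfl
        · exact Finset.mem_union_left _ hρ
        · exact Finset.mem_union_right _ hc
      · rw [if_neg hfj] at he; exact absurd he (Finset.notMem_empty _)
  have hd12 : Disjoint E1 E2 := by
    rw [Finset.disjoint_left]
    intro e he1 he2
    rw [hE1, Finset.mem_filter] at he1
    rw [hE2, Finset.mem_filter] at he2
    induction e using Sym2.ind with
    | _ a b =>
      have ha1 : a ∈ B₁ := mem_of_mem_edgesIn T he1.1 (Sym2.mem_mk_left a b)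
      have ha2 : a ∈ B₂ := mem_of_mem_edgesIn T he2.1 (Sym2.mem_mk_left a b)
      exact ((Finset.disjoint_left.mp hdB) ha1 ha2).elim
  have hdX : Disjoint (E1 ∪ E2) X := by
    rw [Finset.disjoint_left]
    intro e he hex
    rw [hX] at hex
    by_cases hfj : f s(ρ, c) = j
    · rw [if_pos hfj, Finset.mem_singleton] at hex
      subst hex
      rcases Finset.mem_union.mp he with h | h
      · have : c ∈ B₁ := mem_of_mem_edgesIn T (Finset.mem_filter.mp h).1 (Sym2.mem_mk_right ρ c)
        exact (Finset.disjoint_left.mp hdB) this hc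
      · have : ρ ∈ B₂ := mem_of_mem_edgesIn T (Finset.mem_filter.mp h).1 (Sym2.mem_mk_left ρ c)
        exact (Finset.disjoint_left.mp hdB) hρ this
    · rw [if_neg hfj] at hex; exact Finset.notMem_empty _ hex
  have hcnt : cnt T r f j B₁ + cnt T r f j B₂ + X.card ≤ cnt T r f j (B₁ ∪ B₂) := by
    have := Finset.card_le_card hsub
    rwa [Finset.card_union_of_disjoint hdX, Finset.card_union_of_disjoint hd12] at this
  have hXcard : (X.card : ℤ) = (if f s(ρ, c) = j then 1 else 0) := by
    rw [hX]; by_cases hfj : f s(ρ, c) = j <;> simp [hfj]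
  have hcnt' : (cnt T r f j B₁ : ℤ) + cnt T r f j B₂ + (if f s(ρ, c) = j then 1 else 0)
      ≤ (cnt T r f j (B₁ ∪ B₂) : ℤ) := by
    rw [← hXcard]; exact_mod_cast hcnt
  simp only [imb, hcard]
  push_cast
  nlinarith [hcnt', (by exact_mod_cast Nat.zero_le r : (0:ℤ) ≤ (r:ℤ))]


variable [Fintype V] [DecidableRel T.Adj]

lemma mem_of_walk_end {G' : SimpleGraph V} {A : Finset V} (hle : G' ≤ GA T A) :
    ∀ {c x : V}, G'.Walk c x → c ∈ A → x ∈ A := by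
  intro c x w
  induction w with
  | nil => exact id
  | cons h _ ih => intro _; exact ih ((hle h).2.2)

lemma conn_of_closed {G' : SimpleGraph V} (hle : ∀ a b, G'.Adj a b → T.Adj a b)
    {B : Finset V} {c : V} (hc : c ∈ B)
    (hreach : ∀ x ∈ B, G'.Reachable c x)
    (hclosed : ∀ x, G'.Reachable c x → x ∈ B) : Conn T B := by
  have main : ∀ x ∈ B, (GA T B).Reachable c x := by
    intro x hx
    obtain ⟨w⟩ := hreach x hx
    refine ⟨w.transfer (GA T B) ?_⟩
    intro e he
    induction e using Sym2.ind with
    | _ u v =>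
      have hu : u ∈ w.support := w.fst_mem_support_of_mem_edges he
      have hv : v ∈ w.support := w.snd_mem_support_of_mem_edges he
      have huB : u ∈ B := hclosed u ⟨w.takeUntil u hu⟩
      have hvB : v ∈ B := hclosed v ⟨w.takeUntil v hv⟩
      have hadj : G'.Adj u v := (SimpleGraph.mem_edgeSet _).mp (w.edges_subset_edgeSet he)
      exact (SimpleGraph.mem_edgeSet _).mpr ⟨hle u v hadj, huB, hvB⟩
  intro x hx y hy
  exact (main x hx).symm.trans (main y hy)

lemma reachable_or {G' H : SimpleGraph V} {ρ c : V}
    (hH : ∀ a b, H.Adj a b → s(a, b) = s(ρ, c) ∨ G'.Adj a b) :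
    ∀ {x y : V}, H.Walk x y → (G'.Reachable ρ x ∨ G'.Reachable c x) →
      (G'.Reachable ρ y ∨ G'.Reachable c y) := by
  intro x y w
  induction w with
  | nil => exact id
  | cons h _ ih =>
    intro hx
    apply ih
    rcases hH _ _ h with heq | hadj
    · rcases Sym2.eq_iff.mp heq with ⟨rfl, rfl⟩ | ⟨rfl, rfl⟩
      · exact Or.inr (SimpleGraph.Reachable.refl _)
      · exact Or.inl (SimpleGraph.Reachable.refl _)
    · rcases hx with h1 | h1
      · exact Or.inl (h1.trans hadj.reachable)
      · exact Or.inr (h1.trans hadj.reachable)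

lemma no_return (hT : T.IsAcyclic) {A : Finset V} {ρ c : V} (hadj : T.Adj ρ c) :
    ¬ ((GA T A).deleteEdges {s(ρ, c)}).Reachable c ρ := by
  intro h
  obtain ⟨w⟩ := h
  classical
  set p : ((GA T A).deleteEdges {s(ρ, c)}).Path c ρ := w.toPath with hp
  have hle : (GA T A).deleteEdges {s(ρ, c)} ≤ T :=
    le_trans (SimpleGraph.deleteEdges_le _) (GA_le T A)
  have hedges : ∀ e ∈ p.1.edges, e ∈ T.edgeSet := by
    intro e he
    exact SimpleGraph.edgeSet_mono hle (p.1.edges_subset_edgeSet he)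
  set q := p.1.transfer T hedges with hq
  have hqp : q.IsPath := p.2.transfer _
  have hne : s(ρ, c) ∉ q.edges := by
    rw [hq, SimpleGraph.Walk.edges_transfer]
    intro hmem
    have := p.1.edges_subset_edgeSet hmem
    rw [SimpleGraph.edgeSet_deleteEdges] at this
    exact this.2 rfl
  exact hT _ (SimpleGraph.Path.cons_isCycle (⟨q, hqp⟩ : T.Path c ρ) hadj hne)
lemma key (hT : T.IsAcyclic) (r : ℕ) (hr : 1 ≤ r) (f : Sym2 V → Fin r) :
    ∀ (n : ℕ) (A : Finset V), A.card = n → ∀ ρ ∈ A, Conn T A →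
    ∃ B : Fin r → Finset V,
      (∀ j, ρ ∈ B j ∧ B j ⊆ A ∧ Conn T (B j)) ∧
      ((r : ℤ) - 1) * (Lv T A ρ).card ≤ ∑ j, imb T r f j (B j) := by
  intro n
  induction n using Nat.strong_induction_on with
  | _ n ih =>
  intro A hA ρ hρ hconn
  classical
  by_cases hsing : ∀ x ∈ A, x = ρ
  · -- base case : A = {ρ}
    have hAeq : A = {ρ} := Finset.eq_singleton_iff_unique_mem.mpr ⟨hρ, hsing⟩
    refine ⟨fun _ => {ρ}, fun j => ⟨Finset.mem_singleton_self ρ, by simp [hAeq],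
      conn_singleton T ρ⟩, ?_⟩
    have hLv : Lv T A ρ = ∅ := by
      rw [hAeq]
      ext a
      simp only [Lv, Finset.mem_filter, Finset.mem_singleton, Finset.notMem_empty, iff_false,
        not_and]
      rintro rfl h
      exact absurd rfl h
    rw [hLv]
    simp only [Finset.card_empty, Nat.cast_zero, mul_zero]
    refine Finset.sum_nonneg fun j _ => ?_
    have h1 : imb T r f j {ρ} = (r : ℤ) * cnt T r f j {ρ} := by simp [imb]
    rw [h1]
    positivity
  · push_neg at hsing
    obtain ⟨c₀, hc₀A, hc₀⟩ := hsing
    obtain ⟨w⟩ := hconn hρ hc₀A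
    obtain ⟨c, hadjc⟩ : ∃ c, (GA T A).Adj ρ c := by
      cases w with
      | nil => exact absurd rfl hc₀
      | cons h _ => exact ⟨_, h⟩
    have hadj : T.Adj ρ c := hadjc.1
    have hcA : c ∈ A := hadjc.2.2
    set G' := (GA T A).deleteEdges {s(ρ, c)} with hG'
    have hG'le : G' ≤ GA T A := SimpleGraph.deleteEdges_le _
    have hG'T : ∀ a b, G'.Adj a b → T.Adj a b := fun a b h => (hG'le h).1
    have haρ : ¬ G'.Reachable c ρ := no_return T hT hadj
    set A₂ := A.filter (fun a => G'.Reachable c a) with hA₂def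
    set A₁ := A \ A₂ with hA₁def
    have hcA₂ : c ∈ A₂ := Finset.mem_filter.mpr ⟨hcA, SimpleGraph.Reachable.refl c⟩
    have hρA₂ : ρ ∉ A₂ := fun h => haρ (Finset.mem_filter.mp h).2
    have hρA₁ : ρ ∈ A₁ := Finset.mem_sdiff.mpr ⟨hρ, hρA₂⟩
    have hA₁sub : A₁ ⊆ A := Finset.sdiff_subset
    have hA₂sub : A₂ ⊆ A := Finset.filter_subset _ _
    have hdisj : Disjoint A₁ A₂ := Finset.sdiff_disjoint
    have hunion : A₁ ∪ A₂ = A := Finset.sdiff_union_of_subset hA₂sub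
    have hA₂closed : ∀ x, G'.Reachable c x → x ∈ A₂ := by
      intro x hx
      obtain ⟨wx⟩ := hx
      exact Finset.mem_filter.mpr ⟨mem_of_walk_end T hG'le wx hcA, ⟨wx⟩⟩
    have hcross : ∀ a ∈ A₁, ∀ b ∈ A₂, T.Adj a b → a = ρ ∧ b = c := by
      intro a ha b hb hab
      have haA : a ∈ A := hA₁sub ha
      have hbA : b ∈ A := hA₂sub hb
      by_cases heq : s(a, b) = s(ρ, c)
      · rcases Sym2.eq_iff.mp heq with ⟨rfl, rfl⟩ | ⟨rfl, rfl⟩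
        · exact ⟨rfl, rfl⟩
        · exact absurd hcA₂ (Finset.mem_sdiff.mp ha).2
      · have hba : G'.Adj b a := by
          rw [hG', SimpleGraph.deleteEdges_adj]
          refine ⟨⟨hab.symm, hbA, haA⟩, ?_⟩
          simp only [Set.mem_singleton_iff]
          rw [Sym2.eq_swap]
          exact heq
        have : a ∈ A₂ := hA₂closed a ((Finset.mem_filter.mp hb).2.trans hba.reachable)
        exact absurd this (Finset.mem_sdiff.mp ha).2
    have hsplit : ∀ x ∈ A, G'.Reachable ρ x ∨ G'.Reachable c x := by
      intro x hx
      obtain ⟨wx⟩ := hconn hρ hx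
      refine reachable_or (G' := G') (H := GA T A) ?_ wx
        (Or.inl (SimpleGraph.Reachable.refl ρ))
      intro a b hab
      by_cases heq : s(a, b) = s(ρ, c)
      · exact Or.inl heq
      · right
        rw [hG', SimpleGraph.deleteEdges_adj]
        exact ⟨hab, by simpa using heq⟩
    have hA₁reach : ∀ x ∈ A₁, G'.Reachable ρ x := by
      intro x hx
      rcases hsplit x (hA₁sub hx) with h | h
      · exact h
      · exact absurd (hA₂closed x h) (Finset.mem_sdiff.mp hx).2
    have hA₁closed : ∀ x, G'.Reachable ρ x → x ∈ A₁ := by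
      intro x hx
      obtain ⟨wx⟩ := hx
      refine Finset.mem_sdiff.mpr ⟨mem_of_walk_end T hG'le wx hρ, fun hxA₂ => ?_⟩
      exact haρ (((Finset.mem_filter.mp hxA₂).2).trans (SimpleGraph.Reachable.symm ⟨wx⟩))
    have hconn₁ : Conn T A₁ := conn_of_closed T hG'T hρA₁ hA₁reach hA₁closed
    have hconn₂ : Conn T A₂ :=
      conn_of_closed T hG'T hcA₂ (fun x hx => (Finset.mem_filter.mp hx).2) hA₂closed
    have hcard12 : A₁.card + A₂.card = n := by
      rw [← hA, ← hunion, Finset.card_union_of_disjoint hdisj]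
    have h1lt : A₁.card < n := by
      have : 0 < A₂.card := Finset.card_pos.mpr ⟨c, hcA₂⟩
      omega
    have h2lt : A₂.card < n := by
      have : 0 < A₁.card := Finset.card_pos.mpr ⟨ρ, hρA₁⟩
      omega
    obtain ⟨B₁, hB₁mem, hB₁sum⟩ := ih A₁.card h1lt A₁ rfl ρ hρA₁ hconn₁
    obtain ⟨B₂, hB₂mem, hB₂sum⟩ := ih A₂.card h2lt A₂ rfl c hcA₂ hconn₂
    -- degree transfer
    have hdeg₁ : ∀ a ∈ A₁, a ≠ ρ → degA T A a = degA T A₁ a := by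
      intro a ha hane
      unfold degA
      congr 1
      ext b
      simp only [Finset.mem_filter]
      constructor
      · rintro ⟨hbA, hab⟩
        refine ⟨?_, hab⟩
        by_cases hbA₂ : b ∈ A₂
        · exact absurd (hcross a ha b hbA₂ hab).1 hane
        · exact Finset.mem_sdiff.mpr ⟨hbA, hbA₂⟩
      · rintro ⟨hb, hab⟩
        exact ⟨hA₁sub hb, hab⟩
    have hdeg₂ : ∀ a ∈ A₂, a ≠ c → degA T A a = degA T A₂ a := by
      intro a ha hane
      unfold degA
      congr 1
      ext b
      simp only [Finset.mem_filter]
      constructor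
      · rintro ⟨hbA, hab⟩
        refine ⟨?_, hab⟩
        by_cases hbA₁ : b ∈ A₁
        · exact absurd (hcross b hbA₁ a ha hab.symm).2 hane
        · rcases Finset.mem_union.mp (hunion ▸ hbA) with h | h
          · exact absurd h hbA₁
          · exact h
      · rintro ⟨hb, hab⟩
        exact ⟨hA₂sub hb, hab⟩
    -- the gain from the branch A₂
    set gain : ℤ := if A₂.card = 1 then 1 else ((Lv T A₂ c).card : ℤ) with hgain
    have hL : ((Lv T A ρ).card : ℤ) ≤ ((Lv T A₁ ρ).card : ℤ) + gain := by
      by_cases h1 : A₂.card = 1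
      · -- A₂ = {c}
        have hA₂eq : A₂ = {c} := by
          obtain ⟨x, hx⟩ := Finset.card_eq_one.mp h1
          rw [hx] at hcA₂
          rw [Finset.mem_singleton] at hcA₂
          rw [hx, hcA₂]
        have hsub : Lv T A ρ ⊆ Lv T A₁ ρ ∪ {c} := by
          intro a ha
          obtain ⟨haA, hane, hdeg⟩ := Finset.mem_filter.mp ha
          by_cases ha₂ : a ∈ A₂
          · rw [hA₂eq, Finset.mem_singleton] at ha₂
            exact Finset.mem_union_right _ (Finset.mem_singleton.mpr ha₂)
          · have ha₁ : a ∈ A₁ := Finset.mem_sdiff.mpr ⟨haA, ha₂⟩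
            exact Finset.mem_union_left _ (Finset.mem_filter.mpr
              ⟨ha₁, hane, (hdeg₁ a ha₁ hane) ▸ hdeg⟩)
        rw [hgain, if_pos h1]
        calc ((Lv T A ρ).card : ℤ) ≤ ((Lv T A₁ ρ ∪ {c}).card : ℤ) := by
              exact_mod_cast Finset.card_le_card hsub
          _ ≤ ((Lv T A₁ ρ).card : ℤ) + 1 := by
              have := Finset.card_union_le (Lv T A₁ ρ) ({c} : Finset V)
              simp only [Finset.card_singleton] at this
              exact_mod_cast this
      · -- A₂ has at least 2 elements
        have hdegc : degA T A c = degA T A₂ c + 1 := by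
          unfold degA
          have hins : A.filter (fun b => T.Adj c b) =
              insert ρ (A₂.filter (fun b => T.Adj c b)) := by
            ext b
            simp only [Finset.mem_filter, Finset.mem_insert]
            constructor
            · rintro ⟨hbA, hab⟩
              by_cases hbA₁ : b ∈ A₁
              · exact Or.inl (hcross b hbA₁ c hcA₂ hab.symm).1
              · refine Or.inr ⟨?_, hab⟩
                rcases Finset.mem_union.mp (hunion ▸ hbA) with h | h
                · exact absurd h hbA₁
                · exact h
            · rintro (rfl | ⟨hb, hab⟩)
              · exact ⟨hρ, hadj.symm⟩
              · exact ⟨hA₂sub hb, hab⟩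
          have hρnot : ρ ∉ A₂.filter (fun b => T.Adj c b) := fun hmem =>
            hρA₂ (Finset.filter_subset _ _ hmem)
          rw [hins, Finset.card_insert_of_notMem hρnot]
        have hcne : c ∉ Lv T A ρ := by
          intro hc
          obtain ⟨-, -, hdegc1⟩ := Finset.mem_filter.mp hc
          have hdegc2 : degA T A₂ c = 0 := by omega
          have hall : ∀ x ∈ A₂, x = c := by
            intro x hx
            by_contra hxc
            obtain ⟨wx⟩ := hconn₂ hcA₂ hx
            cases wx with
            | nil => exact hxc rfl
            | cons h _ =>
              have : _ ∈ A₂.filter (fun b => T.Adj c b) :=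
                Finset.mem_filter.mpr ⟨h.2.2, h.1⟩
              have h0 : (A₂.filter (fun b => T.Adj c b)).card ≠ 0 :=
                Finset.card_ne_zero_of_mem this
              exact h0 hdegc2
          exact h1 (Finset.card_eq_one.mpr ⟨c,
            Finset.eq_singleton_iff_unique_mem.mpr ⟨hcA₂, hall⟩⟩)
        have hsub : Lv T A ρ ⊆ Lv T A₁ ρ ∪ Lv T A₂ c := by
          intro a ha
          obtain ⟨haA, hane, hdeg⟩ := Finset.mem_filter.mp ha
          by_cases ha₂ : a ∈ A₂
          · have hac : a ≠ c := fun h => hcne (h ▸ ha)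
            exact Finset.mem_union_right _ (Finset.mem_filter.mpr
              ⟨ha₂, hac, (hdeg₂ a ha₂ hac) ▸ hdeg⟩)
          · have ha₁ : a ∈ A₁ := Finset.mem_sdiff.mpr ⟨haA, ha₂⟩
            exact Finset.mem_union_left _ (Finset.mem_filter.mpr
              ⟨ha₁, hane, (hdeg₁ a ha₁ hane) ▸ hdeg⟩)
        rw [hgain, if_neg h1]
        calc ((Lv T A ρ).card : ℤ) ≤ ((Lv T A₁ ρ ∪ Lv T A₂ c).card : ℤ) := by
              exact_mod_cast Finset.card_le_card hsub
          _ ≤ ((Lv T A₁ ρ).card : ℤ) + ((Lv T A₂ c).card : ℤ) := by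
              exact_mod_cast Finset.card_union_le _ _
    -- weights
    set wt : Fin r → ℤ := fun j => (r : ℤ) * (if f s(ρ, c) = j then 1 else 0) - 1 with hwt
    set B : Fin r → Finset V := fun j =>
      if 0 ≤ wt j + imb T r f j (B₂ j) then B₁ j ∪ B₂ j else B₁ j with hB
    have hBmem : ∀ j, ρ ∈ B j ∧ B j ⊆ A ∧ Conn T (B j) := by
      intro j
      obtain ⟨hρB₁, hB₁A, hB₁conn⟩ := hB₁mem j
      obtain ⟨hcB₂, hB₂A, hB₂conn⟩ := hB₂mem j
      simp only [hB]
      by_cases h0 : 0 ≤ wt j + imb T r f j (B₂ j)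
      · rw [if_pos h0]
        exact ⟨Finset.mem_union_left _ hρB₁,
          Finset.union_subset (hB₁A.trans hA₁sub) (hB₂A.trans hA₂sub),
          conn_union T hB₁conn hB₂conn hρB₁ hcB₂ hadj⟩
      · rw [if_neg h0]
        exact ⟨hρB₁, hB₁A.trans hA₁sub, hB₁conn⟩
    refine ⟨B, hBmem, ?_⟩
    have hperj : ∀ j, imb T r f j (B₁ j) + max 0 (wt j + imb T r f j (B₂ j))
        ≤ imb T r f j (B j) := by
      intro j
      simp only [hB]
      by_cases h0 : 0 ≤ wt j + imb T r f j (B₂ j)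
      · rw [if_pos h0, max_eq_right h0]
        have := imb_union T (f := f) hdisj (hB₁mem j).2.1 (hB₂mem j).2.1
          (hB₁mem j).1 (hB₂mem j).1 hadj j
        simp only [hwt]
        linarith [this]
      · rw [if_neg h0, max_eq_left (le_of_not_ge h0)]
        simp
    have hsum1 : ∑ j, (imb T r f j (B₁ j) + max 0 (wt j + imb T r f j (B₂ j)))
        ≤ ∑ j, imb T r f j (B j) := Finset.sum_le_sum (fun j _ => hperj j)
    rw [Finset.sum_add_distrib] at hsum1
    have hwtsum : ∑ j, wt j = 0 := by
      rw [hwt]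
      simp only [Finset.sum_sub_distrib, ← Finset.mul_sum]
      rw [Finset.sum_ite_eq]
      simp
    have hgainsum : ((r : ℤ) - 1) * gain ≤ ∑ j, max 0 (wt j + imb T r f j (B₂ j)) := by
      by_cases h1 : A₂.card = 1
      · rw [hgain, if_pos h1, mul_one]
        have hA₂eq : A₂ = {c} := by
          obtain ⟨x, hx⟩ := Finset.card_eq_one.mp h1
          rw [hx] at hcA₂
          rw [Finset.mem_singleton] at hcA₂
          rw [hx, hcA₂]
        set j₀ := f s(ρ, c) with hj₀
        have hB₂j₀ : B₂ j₀ = {c} := by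
          have h1 : B₂ j₀ ⊆ {c} := hA₂eq ▸ (hB₂mem j₀).2.1
          have h2 : c ∈ B₂ j₀ := (hB₂mem j₀).1
          exact Finset.Subset.antisymm h1 (Finset.singleton_subset_iff.mpr h2)
        have himbpos : 0 ≤ imb T r f j₀ (B₂ j₀) := by
          rw [hB₂j₀]
          have : imb T r f j₀ {c} = (r : ℤ) * cnt T r f j₀ {c} := by simp [imb]
          rw [this]
          positivity
        have hterm : ((r : ℤ) - 1) ≤ max 0 (wt j₀ + imb T r f j₀ (B₂ j₀)) := by
          have : wt j₀ = (r : ℤ) - 1 := by rw [hwt]; simp [hj₀]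
          calc ((r : ℤ) - 1) ≤ wt j₀ + imb T r f j₀ (B₂ j₀) := by rw [this]; linarith
            _ ≤ _ := le_max_right _ _
        calc ((r : ℤ) - 1) ≤ max 0 (wt j₀ + imb T r f j₀ (B₂ j₀)) := hterm
          _ ≤ ∑ j, max 0 (wt j + imb T r f j (B₂ j)) :=
              Finset.single_le_sum (f := fun j => max 0 (wt j + imb T r f j (B₂ j)))
                (fun j _ => le_max_left _ _) (Finset.mem_univ j₀)
      · rw [hgain, if_neg h1]
        calc ((r : ℤ) - 1) * ((Lv T A₂ c).card : ℤ) ≤ ∑ j, imb T r f j (B₂ j) := hB₂sum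
          _ = ∑ j, (wt j + imb T r f j (B₂ j)) := by
              rw [Finset.sum_add_distrib, hwtsum, zero_add]
          _ ≤ ∑ j, max 0 (wt j + imb T r f j (B₂ j)) :=
              Finset.sum_le_sum (fun j _ => le_max_right _ _)
    have hrpos : (0 : ℤ) ≤ (r : ℤ) - 1 := by
      have : (1 : ℤ) ≤ (r : ℤ) := by exact_mod_cast hr
      linarith
    calc ((r : ℤ) - 1) * ((Lv T A ρ).card : ℤ)
        ≤ ((r : ℤ) - 1) * (((Lv T A₁ ρ).card : ℤ) + gain) := by
          exact mul_le_mul_of_nonneg_left hL hrpos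
      _ = ((r : ℤ) - 1) * ((Lv T A₁ ρ).card : ℤ) + ((r : ℤ) - 1) * gain := by ring
      _ ≤ ∑ j, imb T r f j (B₁ j) + ∑ j, max 0 (wt j + imb T r f j (B₂ j)) := by
          exact add_le_add hB₁sum hgainsum
      _ ≤ ∑ j, imb T r f j (B j) := hsum1
lemma bridge (hT : T.IsAcyclic) {r : ℕ} (f : Sym2 V → Fin r) {B : Finset V} {ρ : V}
    (hρ : ρ ∈ B) (hconn : Conn T B) :
    ∃ S : T.Subgraph, S.Connected ∧ (S.edgeSet.ncard : ℤ) = (B.card : ℤ) - 1 ∧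
      ∀ j, (({e ∈ S.edgeSet | f e = j} : Set (Sym2 V)).ncard : ℤ) = (cnt T r f j B : ℤ) := by
  classical
  set S : T.Subgraph := (⊤ : T.Subgraph).induce ↑B with hS
  have hSadj : ∀ a b, S.Adj a b ↔ a ∈ B ∧ b ∈ B ∧ T.Adj a b := by
    intro a b
    rw [hS]
    simp [SimpleGraph.Subgraph.induce_adj]
  have step : ∀ {x y : V} (w : (GA T B).Walk x y) (hx : x ∈ S.verts) (hy : y ∈ S.verts),
      S.coe.Reachable ⟨x, hx⟩ ⟨y, hy⟩ := by
    intro x y w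
    induction w with
    | nil => intro hx hy; exact SimpleGraph.Reachable.refl _
    | cons h p ih =>
      rename_i u v₀ y₀
      intro hx hy
      have hv : v₀ ∈ S.verts := by
        show v₀ ∈ (↑B : Set V)
        exact_mod_cast h.2.2
      have hadj : S.coe.Adj ⟨u, hx⟩ ⟨v₀, hv⟩ := by
        show S.Adj u v₀
        rw [hSadj]
        exact ⟨h.2.1, h.2.2, h.1⟩
      exact hadj.reachable.trans (ih hv hy)
  have hρv : ρ ∈ S.verts := by show ρ ∈ (↑B : Set V); exact_mod_cast hρ
  have hconnS : S.Connected := by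
    rw [SimpleGraph.Subgraph.connected_iff']
    rw [SimpleGraph.connected_iff]
    refine ⟨?_, ⟨⟨ρ, hρv⟩⟩⟩
    rintro ⟨x, hx⟩ ⟨y, hy⟩
    have hxB : x ∈ B := by exact_mod_cast hx
    have hyB : y ∈ B := by exact_mod_cast hy
    obtain ⟨w⟩ := hconn hxB hyB
    exact step w hx hy
  have hedge : S.edgeSet = ↑(edgesIn T B) := by
    ext e
    induction e using Sym2.ind with
    | _ a b =>
      rw [SimpleGraph.Subgraph.mem_edgeSet, hSadj, Finset.mem_coe, mem_edgesIn]
      constructor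
      · rintro ⟨ha, hb, hadj⟩
        refine ⟨hadj, ?_⟩
        intro v hv
        rcases Sym2.mem_iff.mp hv with rfl | rfl
        · exact ha
        · exact hb
      · rintro ⟨hadj, hall⟩
        exact ⟨hall a (Sym2.mem_mk_left a b), hall b (Sym2.mem_mk_right a b), hadj⟩
  have hhominj : Function.Injective S.hom := Subtype.val_injective
  have hacyc : S.coe.IsAcyclic := by
    intro v cyc hcyc
    exact hT _ (hcyc.map hhominj)
  have htree : S.coe.IsTree := ⟨hconnS.coe, hacyc⟩
  haveI : Fintype S.verts := Set.Finite.fintype (B.finite_toSet)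
  haveI : Fintype S.coe.edgeSet := Set.Finite.fintype (Set.toFinite _)
  have hcardV : Fintype.card S.verts = B.card := by
    rw [← Nat.card_eq_fintype_card]
    show Nat.card (↑(↑B : Set V)) = B.card
    rw [Nat.card_coe_set_eq, Set.ncard_coe_finset]
  have hecard : S.coe.edgeFinset.card + 1 = B.card := by
    rw [htree.card_edgeFinset, hcardV]
  have h2 : S.edgeSet.ncard = S.coe.edgeSet.ncard := by
    rw [← SimpleGraph.Subgraph.image_coe_edgeSet_coe,
      Set.ncard_image_of_injective _ (Sym2.map.injective Subtype.val_injective)]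
  have h3 : S.coe.edgeSet.ncard = S.coe.edgeFinset.card := by
    rw [Set.ncard_eq_toFinset_card']
    exact congrArg Finset.card (by ext e; simp)
  refine ⟨S, hconnS, ?_, ?_⟩
  · rw [h2, h3]
    omega
  · intro j
    have hset : ({e ∈ S.edgeSet | f e = j} : Set (Sym2 V)) =
        ↑((edgesIn T B).filter (fun e => f e = j)) := by
      rw [hedge]
      ext e
      simp [Finset.mem_filter]
    rw [hset, Set.ncard_coe_finset]
    unfold cnt
    congr 1

end MDisc

open SimpleGraph MDisc

/-- **Multicolour discrepancy of subtrees, lower bound.**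
For every `r ≥ 2` and every finite tree `T` with `ℓ` leaves, every `r`-colouring of the
edges of `T` admits a subtree `S` (a connected subgraph) and a colour `j` whose imbalance
`r·|{e ∈ E(S) : f e = j}| − |E(S)|` is at least `⌈(r-1)ℓ/r⌉`. -/
theorem multicolour_discrepancy_lower_bound
    {V : Type*} [Fintype V] (T : SimpleGraph V) [DecidableRel T.Adj]
    (hT : T.IsTree) (r : ℕ) (hr : 2 ≤ r) (ℓ : ℕ)
    (hℓ : ℓ = ({v : V | T.degree v = 1} : Set V).ncard)
    (f : Sym2 V → Fin r) :
    ∃ S : T.Subgraph, S.Connected ∧ ∃ j : Fin r,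
      (⌈(((r : ℚ) - 1) * ℓ) / r⌉ : ℤ) ≤
        (r : ℤ) * ({e ∈ S.edgeSet | f e = j} : Set (Sym2 V)).ncard
          - (S.edgeSet.ncard : ℤ) := by
  classical
  have hrq : (0 : ℚ) < r := by exact_mod_cast (by omega : 0 < r)
  haveI : Nonempty V := hT.isConnected.nonempty
  have hacyc := hT.IsAcyclic
  by_cases h1 : Fintype.card V = 1
  · obtain ⟨v⟩ := ‹Nonempty V›
    haveI hsub : Subsingleton V := Fintype.card_le_one_iff_subsingleton.mp (by omega)
    have hempty : ({v : V | T.degree v = 1} : Set V) = ∅ := by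
      ext u
      simp only [Set.mem_setOf_eq, Set.mem_empty_iff_false, iff_false]
      intro hdeg
      obtain ⟨w, hw⟩ := (T.degree_pos_iff_exists_adj u).mp (by omega : 0 < T.degree u)
      exact T.loopless.irrefl u (Subsingleton.elim w u ▸ hw)
    have hl0 : ℓ = 0 := by rw [hℓ, hempty, Set.ncard_empty]
    obtain ⟨S, hSconn, hScard, hScnt⟩ :=
      bridge T hacyc f (Finset.mem_singleton_self v) (conn_singleton T v)
    refine ⟨S, hSconn, ⟨0, by omega⟩, ?_⟩
    rw [hl0]
    simp only [Nat.cast_zero, mul_zero, zero_div, Int.ceil_zero]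
    have hz : (S.edgeSet.ncard : ℤ) = 0 := by rw [hScard]; simp
    rw [hz, sub_zero]
    positivity
  · by_cases h2 : Fintype.card V = 2
    · obtain ⟨a, b, hab, huniv⟩ := Finset.card_eq_two.mp (show (Finset.univ : Finset V).card = 2 by rw [Finset.card_univ]; exact h2)
      have hmem2 : ∀ x : V, x = a ∨ x = b := by
        intro x
        have hx : x ∈ (Finset.univ : Finset V) := Finset.mem_univ x
        rw [huniv] at hx
        simpa using hx
      have hadj : T.Adj a b := by
        obtain ⟨w⟩ := hT.isConnected.preconnected a b
        cases w with
        | nil => exact absurd rfl hab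
        | cons h p =>
          rename_i x
          rcases hmem2 x with rfl | rfl
          · exact (T.loopless.irrefl _ h).elim
          · exact h
      have hconn2 : Conn T {a, b} := by
        have hGadj : (GA T {a, b}).Adj a b := ⟨hadj, by simp, by simp⟩
        have hra : ∀ z ∈ ({a, b} : Finset V), (GA T {a, b}).Reachable z a := by
          intro z hz
          rcases Finset.mem_insert.mp hz with rfl | hz
          · exact Reachable.refl _
          · rw [Finset.mem_singleton] at hz
            subst hz
            exact hGadj.symm.reachable
        intro x hx y hy
        exact (hra x hx).trans (hra y hy).symm
      obtain ⟨S, hSconn, hScard, hScnt⟩ :=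
        bridge T hacyc f (show a ∈ ({a, b} : Finset V) by simp) hconn2
      refine ⟨S, hSconn, f s(a, b), ?_⟩
      have hdeg1 : ∀ u : V, T.degree u = 1 := by
        intro u
        have hnb : ∀ u' w : V, u' ≠ w → T.Adj u' w → T.neighborFinset u' = {w} := by
          intro u' w hne hadj'
          ext x
          rw [SimpleGraph.mem_neighborFinset, Finset.mem_singleton]
          constructor
          · intro hx
            rcases hmem2 x with rfl | rfl <;> rcases hmem2 u' with rfl | rfl <;>
              rcases hmem2 w with rfl | rfl <;> first
                | rfl
                | exact (T.loopless.irrefl _ hx).elim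
                | exact (hne rfl).elim
                | exact (T.loopless.irrefl _ hadj').elim
          · rintro rfl
            exact hadj'
        rcases hmem2 u with rfl | rfl
        · rw [SimpleGraph.degree, hnb u b hab hadj, Finset.card_singleton]
        · rw [SimpleGraph.degree, hnb u a (Ne.symm hab) hadj.symm, Finset.card_singleton]
      have hl2 : ℓ = 2 := by
        rw [hℓ]
        have huset : ({v : V | T.degree v = 1} : Set V) = Set.univ := by
          ext u
          simp [hdeg1 u]
        rw [huset, Set.ncard_univ, Nat.card_eq_fintype_card, h2]
      have hcard2 : ({a, b} : Finset V).card = 2 := by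
        rw [Finset.card_insert_of_notMem (by simpa using hab), Finset.card_singleton]
      have hcnt1 : 1 ≤ cnt T r f (f s(a, b)) {a, b} := by
        refine Finset.card_pos.mpr ⟨s(a, b), ?_⟩
        rw [Finset.mem_filter, mem_edgesIn]
        refine ⟨⟨hadj, ?_⟩, rfl⟩
        intro v hv
        rcases Sym2.mem_iff.mp hv with rfl | rfl <;> simp
      have hRHS : ((r : ℤ) - 1) ≤ (r : ℤ) *
          ({e ∈ S.edgeSet | f e = f s(a, b)} : Set (Sym2 V)).ncard - (S.edgeSet.ncard : ℤ) := by
        rw [hScnt (f s(a, b)), hScard, hcard2]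
        have : (1 : ℤ) ≤ (cnt T r f (f s(a, b)) {a, b} : ℤ) := by exact_mod_cast hcnt1
        have hr' : (1 : ℤ) ≤ (r : ℤ) := by exact_mod_cast (by omega : 1 ≤ r)
        push_cast
        nlinarith [mul_le_mul_of_nonneg_left this (by linarith : (0:ℤ) ≤ (r:ℤ))]
      refine le_trans ?_ hRHS
      rw [Int.ceil_le, hl2]
      push_cast
      rw [div_le_iff₀ hrq]
      have : (2 : ℚ) ≤ (r : ℚ) := by exact_mod_cast hr
      nlinarith
    · have hcpos : 0 < Fintype.card V := Fintype.card_pos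
      have h3 : 3 ≤ Fintype.card V := by omega
      have hsum := T.sum_degrees_eq_twice_card_edges
      have hecard : T.edgeFinset.card + 1 = Fintype.card V := hT.card_edgeFinset
      obtain ⟨ρ, hρdeg⟩ : ∃ ρ : V, T.degree ρ ≠ 1 := by
        by_contra hall
        push_neg at hall
        have : ∑ v : V, T.degree v = Fintype.card V := by
          rw [Finset.sum_congr rfl (fun v _ => hall v)]
          simp
        omega
      have hConnU : Conn T Finset.univ := by
        have hGA : GA T Finset.univ = T := by
          ext a b
          simp [GA_adj]
        intro x _ y _
        rw [hGA]
        exact hT.isConnected.preconnected x y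
      obtain ⟨B, hBmem, hBsum⟩ := key T hacyc r (by omega) f (Fintype.card V)
        Finset.univ (by rw [Finset.card_univ]) ρ (Finset.mem_univ ρ) hConnU
      have hdegA : ∀ a : V, degA T Finset.univ a = T.degree a := by
        intro a
        unfold degA SimpleGraph.degree
        congr 1
        ext b
        simp [SimpleGraph.mem_neighborFinset]
      have hLv : (Lv T Finset.univ ρ).card = ℓ := by
        rw [hℓ]
        have hset : ({v : V | T.degree v = 1} : Set V) =
            ↑(Finset.univ.filter (fun v => T.degree v = 1)) := by
          ext v; simp
        rw [hset, Set.ncard_coe_finset]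
        congr 1
        unfold Lv
        ext a
        simp only [Finset.mem_filter, Finset.mem_univ, true_and, hdegA]
        constructor
        · rintro ⟨-, h⟩; exact h
        · intro h; exact ⟨fun he => hρdeg (he ▸ h), h⟩
      have hne : (Finset.univ : Finset (Fin r)).Nonempty := ⟨⟨0, by omega⟩, Finset.mem_univ _⟩
      obtain ⟨j, -, hjmax⟩ := Finset.exists_max_image Finset.univ
        (fun j => imb T r f j (B j)) hne
      have hsum_le : ∑ j', imb T r f j' (B j') ≤ (r : ℤ) * imb T r f j (B j) := by
        calc ∑ j', imb T r f j' (B j') ≤ ∑ _j' : Fin r, imb T r f j (B j) :=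
              Finset.sum_le_sum (fun j' _ => hjmax j' (Finset.mem_univ j'))
          _ = (r : ℤ) * imb T r f j (B j) := by
              rw [Finset.sum_const, Finset.card_univ, Fintype.card_fin, nsmul_eq_mul]
      obtain ⟨hρB, hBsub, hBconn⟩ := hBmem j
      obtain ⟨S, hSconn, hScard, hScnt⟩ := bridge T hacyc f hρB hBconn
      refine ⟨S, hSconn, j, ?_⟩
      have hRHS : (r : ℤ) * ({e ∈ S.edgeSet | f e = j} : Set (Sym2 V)).ncard
          - (S.edgeSet.ncard : ℤ) = imb T r f j (B j) := by
        rw [hScnt j, hScard]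
        unfold imb
        ring
      rw [hRHS]
      rw [Int.ceil_le]
      have hchain : ((r : ℤ) - 1) * (ℓ : ℤ) ≤ (r : ℤ) * imb T r f j (B j) := by
        calc ((r : ℤ) - 1) * (ℓ : ℤ)
            = ((r : ℤ) - 1) * ((Lv T Finset.univ ρ).card : ℤ) := by rw [hLv]
          _ ≤ ∑ j', imb T r f j' (B j') := hBsum
          _ ≤ _ := hsum_le
      rw [div_le_iff₀ hrq]
      have hq : ((r : ℚ) - 1) * (ℓ : ℚ) ≤ (r : ℚ) * ((imb T r f j (B j) : ℤ) : ℚ) := by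
        exact_mod_cast hchain
      nlinarith [hq]
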